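/- Let f be a continuous function ℂ → ℂ, p ≥ 1, α > 0, with ∫_ℂ |f(z)|^p e^{-αp|z|²/2} dA(z) < ∞. For 0 < r < 1 let f_r(z) = f(rz). Then lim_{r→1⁻} ∫_ℂ |f_r(z) - f(z)|^p e^{-αp|z|²/2} dA(z) = 0. -/

import Mathlib

open MeasureTheory

lemma fock_rpow_bound (p : ℝ) (hp : 1 ≤ p) (a b : ℂ) :
    ‖a - b‖ ^ p ≤ 2 ^ p * (‖a‖ ^ p + ‖b‖ ^ p) := by
  have hp0 : (0:ℝ) ≤ p := le_trans zero_le_one hp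
  have h1 : ‖a - b‖ ≤ 2 * max ‖a‖ ‖b‖ := by
    calc ‖a - b‖ ≤ ‖a‖ + ‖b‖ := norm_sub_le a b
      _ ≤ max ‖a‖ ‖b‖ + max ‖a‖ ‖b‖ := add_le_add (le_max_left _ _) (le_max_right _ _)
      _ = 2 * max ‖a‖ ‖b‖ := (two_mul _).symm
  have hmax : (0:ℝ) ≤ max ‖a‖ ‖b‖ := le_trans (norm_nonneg a) (le_max_left _ _)
  calc ‖a - b‖ ^ p ≤ (2 * max ‖a‖ ‖b‖) ^ p :=
        Real.rpow_le_rpow (norm_nonneg _) h1 hp0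
    _ = 2 ^ p * (max ‖a‖ ‖b‖) ^ p := Real.mul_rpow (by norm_num) hmax
    _ ≤ 2 ^ p * (‖a‖ ^ p + ‖b‖ ^ p) := by
        apply mul_le_mul_of_nonneg_left _ (Real.rpow_nonneg (by norm_num) p)
        rcases le_total ‖a‖ ‖b‖ with h | h
        · rw [max_eq_right h]
          exact le_add_of_nonneg_left (Real.rpow_nonneg (norm_nonneg _) p)
        · rw [max_eq_left h]
          exact le_add_of_nonneg_right (Real.rpow_nonneg (norm_nonneg _) p)

theorem fock_dilation_convergence (α p : ℝ) (hα : 0 < α) (hp : 1 ≤ p)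
    (f : ℂ → ℂ) (hf : Continuous f)
    (hint : Integrable (fun z : ℂ => ‖f z‖ ^ p * Real.exp (-α * p * ‖z‖ ^ 2 / 2))) :
    Filter.Tendsto
      (fun r : ℝ => ∫ z : ℂ, ‖f (r • z) - f z‖ ^ p * Real.exp (-α * p * ‖z‖ ^ 2 / 2))
      (nhdsWithin 1 (Set.Ioo (0 : ℝ) 1)) (nhds 0) := by
  have hp0 : (0:ℝ) < p := lt_of_lt_of_le one_pos hp
  -- weight and basic continuity facts
  have hWc : Continuous fun z : ℂ => Real.exp (-α * p * ‖z‖ ^ 2 / 2) := by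
    apply Real.continuous_exp.comp; continuity
  have hWnn : ∀ z : ℂ, 0 ≤ Real.exp (-α * p * ‖z‖ ^ 2 / 2) := fun z => (Real.exp_pos _).le
  have hφc : Continuous fun z : ℂ => ‖f z‖ ^ p * Real.exp (-α * p * ‖z‖ ^ 2 / 2) :=
    ((hf.norm).rpow_const (fun x => Or.inr hp0.le)).mul hWc
  have hφnn : ∀ z : ℂ, 0 ≤ ‖f z‖ ^ p * Real.exp (-α * p * ‖z‖ ^ 2 / 2) := fun z =>
    mul_nonneg (Real.rpow_nonneg (norm_nonneg _) p) (hWnn z)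
  -- reduce to sequences
  rw [Filter.tendsto_iff_seq_tendsto]
  intro u hu
  have hu1 : Filter.Tendsto u Filter.atTop (nhds 1) := hu.mono_right nhdsWithin_le_nhds
  have humem : ∀ᶠ n in Filter.atTop, u n ∈ Set.Ioo (0:ℝ) 1 := hu self_mem_nhdsWithin
  -- the dilated kernel K r z
  set K : ℝ → ℂ → ℝ := fun r z => ‖f z‖ ^ p * Real.exp (-α * p * ‖z‖ ^ 2 / (2 * r ^ 2)) with hK
  have hKc : ∀ r : ℝ, Continuous (K r) := by
    intro r
    exact ((hf.norm).rpow_const (fun x => Or.inr hp0.le)).mul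
      (Real.continuous_exp.comp (by continuity))
  have hKle : ∀ r ∈ Set.Ioo (0:ℝ) 1, ∀ z : ℂ,
      K r z ≤ ‖f z‖ ^ p * Real.exp (-α * p * ‖z‖ ^ 2 / 2) := by
    intro r hr z
    apply mul_le_mul_of_nonneg_left _ (Real.rpow_nonneg (norm_nonneg _) p)
    apply Real.exp_le_exp.mpr
    rw [div_le_div_iff₀ (by nlinarith [hr.1] : (0:ℝ) < 2 * r ^ 2) (by norm_num : (0:ℝ) < 2)]
    have h1 : 0 ≤ α * p * ‖z‖ ^ 2 := by positivity
    have h2 : r ^ 2 ≤ 1 := by nlinarith [hr.1, hr.2]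
    nlinarith [mul_nonneg h1 (sub_nonneg.mpr h2)]
  have hKnn : ∀ r : ℝ, ∀ z : ℂ, 0 ≤ K r z := fun r z =>
    mul_nonneg (Real.rpow_nonneg (norm_nonneg _) p) (Real.exp_pos _).le
  have hK_int : ∀ r ∈ Set.Ioo (0:ℝ) 1, Integrable (K r) := by
    intro r hr
    refine hint.mono ((hKc r).aestronglyMeasurable) (Filter.Eventually.of_forall fun z => ?_)
    rw [Real.norm_of_nonneg (hKnn r z), Real.norm_of_nonneg (hφnn z)]
    exact hKle r hr z
  -- rewriting the dilated integrand via K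
  have hKrz : ∀ r ∈ Set.Ioo (0:ℝ) 1, ∀ z : ℂ,
      K r (r • z) = ‖f (r • z)‖ ^ p * Real.exp (-α * p * ‖z‖ ^ 2 / 2) := by
    intro r hr z
    have hr0 : r ≠ 0 := ne_of_gt hr.1
    have : ‖r • z‖ ^ 2 = r ^ 2 * ‖z‖ ^ 2 := by
      rw [norm_smul, Real.norm_eq_abs, mul_pow, sq_abs]
    simp only [hK, this]
    congr 1
    field_simp
  -- integrability of the dilated function
  have hdil_int : ∀ r ∈ Set.Ioo (0:ℝ) 1,
      Integrable (fun z : ℂ => ‖f (r • z)‖ ^ p * Real.exp (-α * p * ‖z‖ ^ 2 / 2)) := by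
    intro r hr
    have := (hK_int r hr).comp_smul (ne_of_gt hr.1)
    exact this.congr (Filter.Eventually.of_forall fun z => hKrz r hr z)
  -- change of variables
  have hcv : ∀ r ∈ Set.Ioo (0:ℝ) 1,
      (∫ z : ℂ, ‖f (r • z)‖ ^ p * Real.exp (-α * p * ‖z‖ ^ 2 / 2))
        = (r ^ 2)⁻¹ * ∫ z : ℂ, K r z := by
    intro r hr
    have h1 : (∫ z : ℂ, ‖f (r • z)‖ ^ p * Real.exp (-α * p * ‖z‖ ^ 2 / 2))
        = ∫ z : ℂ, K r (r • z) := by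
      refine integral_congr_ae (Filter.Eventually.of_forall fun z => ?_)
      exact (hKrz r hr z).symm
    rw [h1, MeasureTheory.Measure.integral_comp_smul volume (K r) r, Complex.finrank_real_complex, smul_eq_mul]
    congr 1
    rw [abs_of_nonneg (by positivity)]
  -- convergence of ∫ K (u n)
  have hKlim : Filter.Tendsto (fun n => ∫ z : ℂ, K (u n) z) Filter.atTop
      (nhds (∫ z : ℂ, ‖f z‖ ^ p * Real.exp (-α * p * ‖z‖ ^ 2 / 2))) := by
    refine tendsto_integral_filter_of_dominated_convergence
      (fun z : ℂ => ‖f z‖ ^ p * Real.exp (-α * p * ‖z‖ ^ 2 / 2))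
      (Filter.Eventually.of_forall fun n => (hKc (u n)).aestronglyMeasurable)
      (humem.mono fun n hn => Filter.Eventually.of_forall fun z => ?_)
      hint
      (Filter.Eventually.of_forall fun z => ?_)
    · rw [Real.norm_of_nonneg (hKnn (u n) z)]
      exact hKle (u n) hn z
    · apply Filter.Tendsto.const_mul
      apply (Real.continuous_exp.tendsto _).comp
      have h2 : Filter.Tendsto (fun n => 2 * (u n) ^ 2) Filter.atTop (nhds 2) := by
        have := (hu1.pow 2).const_mul (2:ℝ)
        simpa using this
      have := (tendsto_const_nhds (x := -α * p * ‖z‖ ^ 2)).div h2 (by norm_num)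
      simpa [Pi.div_def] using this
  -- convergence of the dilated integrals J n
  have hJlim : Filter.Tendsto
      (fun n => ∫ z : ℂ, ‖f (u n • z)‖ ^ p * Real.exp (-α * p * ‖z‖ ^ 2 / 2))
      Filter.atTop (nhds (∫ z : ℂ, ‖f z‖ ^ p * Real.exp (-α * p * ‖z‖ ^ 2 / 2))) := by
    have h1 : Filter.Tendsto (fun n => ((u n) ^ 2)⁻¹ * ∫ z : ℂ, K (u n) z) Filter.atTop
        (nhds (∫ z : ℂ, ‖f z‖ ^ p * Real.exp (-α * p * ‖z‖ ^ 2 / 2))) := by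
      have h2 : Filter.Tendsto (fun n => ((u n) ^ 2)⁻¹) Filter.atTop (nhds 1) := by
        have := (hu1.pow 2).inv₀ (by norm_num)
        simpa using this
      have := h2.mul hKlim
      simpa using this
    refine Filter.Tendsto.congr' ?_ h1
    exact humem.mono fun n hn => (hcv (u n) hn).symm
  -- pointwise limits
  have hz_lim : ∀ z : ℂ, Filter.Tendsto (fun n => u n • z) Filter.atTop (nhds z) := by
    intro z
    have := hu1.smul (tendsto_const_nhds (x := z))
    simpa using this
  have hnorm_lim : ∀ z : ℂ, Filter.Tendsto (fun n => ‖f (u n • z) - f z‖)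
      Filter.atTop (nhds 0) := by
    intro z
    have h1 := ((hf.tendsto z).comp (hz_lim z)).sub (tendsto_const_nhds (x := f z))
    have h2 := h1.norm
    simpa using h2
  have hG_lim : ∀ z : ℂ, Filter.Tendsto
      (fun n => ‖f (u n • z) - f z‖ ^ p * Real.exp (-α * p * ‖z‖ ^ 2 / 2))
      Filter.atTop (nhds 0) := by
    intro z
    have h1 := (Real.continuousAt_rpow_const 0 p (Or.inr hp0.le)).tendsto.comp (hnorm_lim z)
    rw [Real.zero_rpow (ne_of_gt hp0)] at h1
    have := h1.mul_const (Real.exp (-α * p * ‖z‖ ^ 2 / 2))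
    simpa using this
  have hB_lim : ∀ z : ℂ, Filter.Tendsto
      (fun n => 2 ^ p * (‖f (u n • z)‖ ^ p * Real.exp (-α * p * ‖z‖ ^ 2 / 2)
        + ‖f z‖ ^ p * Real.exp (-α * p * ‖z‖ ^ 2 / 2)))
      Filter.atTop (nhds (2 ^ p * (‖f z‖ ^ p * Real.exp (-α * p * ‖z‖ ^ 2 / 2)
        + ‖f z‖ ^ p * Real.exp (-α * p * ‖z‖ ^ 2 / 2)))) := by
    intro z
    apply Filter.Tendsto.const_mul
    apply Filter.Tendsto.add_const
    have h1 := ((hf.tendsto z).comp (hz_lim z)).norm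
    have h2 := (Real.continuousAt_rpow_const ‖f z‖ p (Or.inr hp0.le)).tendsto.comp h1
    exact h2.mul_const _
  -- the ENNReal machinery (Scheffé / Fatou trick)
  set G' : ℕ → ℂ → ENNReal := fun n z =>
    ENNReal.ofReal (‖f (u n • z) - f z‖ ^ p * Real.exp (-α * p * ‖z‖ ^ 2 / 2)) with hG'
  set B' : ℕ → ℂ → ENNReal := fun n z =>
    ENNReal.ofReal (2 ^ p * (‖f (u n • z)‖ ^ p * Real.exp (-α * p * ‖z‖ ^ 2 / 2)
      + ‖f z‖ ^ p * Real.exp (-α * p * ‖z‖ ^ 2 / 2))) with hB'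
  have hGc : ∀ n, Continuous fun z : ℂ => ‖f (u n • z) - f z‖ ^ p
      * Real.exp (-α * p * ‖z‖ ^ 2 / 2) := by
    intro n
    exact (((hf.comp ((continuous_const : Continuous fun _ : ℂ => u n).smul continuous_id)).sub hf).norm.rpow_const
      (fun x => Or.inr hp0.le)).mul hWc
  have hBc : ∀ n, Continuous fun z : ℂ => 2 ^ p * (‖f (u n • z)‖ ^ p
      * Real.exp (-α * p * ‖z‖ ^ 2 / 2) + ‖f z‖ ^ p * Real.exp (-α * p * ‖z‖ ^ 2 / 2)) := by
    intro n
    exact continuous_const.mul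
      ((((hf.comp ((continuous_const : Continuous fun _ : ℂ => u n).smul continuous_id)).norm.rpow_const
        (fun x => Or.inr hp0.le)).mul hWc).add hφc)
  have hG'meas : ∀ n, Measurable (G' n) := fun n =>
    (ENNReal.continuous_ofReal.comp (hGc n)).measurable
  have hB'meas : ∀ n, Measurable (B' n) := fun n =>
    (ENNReal.continuous_ofReal.comp (hBc n)).measurable
  have hGB : ∀ n, ∀ z : ℂ, G' n z ≤ B' n z := by
    intro n z
    apply ENNReal.ofReal_le_ofReal
    have h1 := fock_rpow_bound p hp (f (u n • z)) (f z)
    have h2 := mul_le_mul_of_nonneg_right h1 (hWnn z)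
    calc ‖f (u n • z) - f z‖ ^ p * Real.exp (-α * p * ‖z‖ ^ 2 / 2)
        ≤ 2 ^ p * (‖f (u n • z)‖ ^ p + ‖f z‖ ^ p) * Real.exp (-α * p * ‖z‖ ^ 2 / 2) := h2
      _ = 2 ^ p * (‖f (u n • z)‖ ^ p * Real.exp (-α * p * ‖z‖ ^ 2 / 2)
          + ‖f z‖ ^ p * Real.exp (-α * p * ‖z‖ ^ 2 / 2)) := by ring
  have hBint : ∀ n, u n ∈ Set.Ioo (0:ℝ) 1 → Integrable (fun z : ℂ => 2 ^ p
      * (‖f (u n • z)‖ ^ p * Real.exp (-α * p * ‖z‖ ^ 2 / 2)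
        + ‖f z‖ ^ p * Real.exp (-α * p * ‖z‖ ^ 2 / 2))) := fun n hn =>
    ((hdil_int (u n) hn).add hint).const_mul _
  -- limit value L
  set L : ENNReal := ∫⁻ z : ℂ, ENNReal.ofReal (2 ^ p * (‖f z‖ ^ p
    * Real.exp (-α * p * ‖z‖ ^ 2 / 2) + ‖f z‖ ^ p * Real.exp (-α * p * ‖z‖ ^ 2 / 2))) with hL
  have hBinfty_int : Integrable (fun z : ℂ => 2 ^ p * (‖f z‖ ^ p
      * Real.exp (-α * p * ‖z‖ ^ 2 / 2) + ‖f z‖ ^ p * Real.exp (-α * p * ‖z‖ ^ 2 / 2))) :=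
    (hint.add hint).const_mul _
  have hL_eq : L = ENNReal.ofReal (∫ z : ℂ, 2 ^ p * (‖f z‖ ^ p
      * Real.exp (-α * p * ‖z‖ ^ 2 / 2) + ‖f z‖ ^ p * Real.exp (-α * p * ‖z‖ ^ 2 / 2))) := by
    rw [hL, ofReal_integral_eq_lintegral_ofReal hBinfty_int
      (Filter.Eventually.of_forall fun z => by positivity)]
  have hL_ne : L ≠ ⊤ := by rw [hL_eq]; exact ENNReal.ofReal_ne_top
  -- pointwise limit of B' - G'
  have h_sub_lim : ∀ z : ℂ, Filter.Tendsto (fun n => B' n z - G' n z) Filter.atTop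
      (nhds (ENNReal.ofReal (2 ^ p * (‖f z‖ ^ p * Real.exp (-α * p * ‖z‖ ^ 2 / 2)
        + ‖f z‖ ^ p * Real.exp (-α * p * ‖z‖ ^ 2 / 2))))) := by
    intro z
    have h1 := ENNReal.tendsto_ofReal (hB_lim z)
    have h2 := ENNReal.tendsto_ofReal (hG_lim z)
    rw [ENNReal.ofReal_zero] at h2
    have := ENNReal.Tendsto.sub h1 h2 (Or.inl ENNReal.ofReal_ne_top)
    rw [tsub_zero] at this
    exact this
  -- Fatou
  have hliminf : L ≤ Filter.liminf (fun n => ∫⁻ z : ℂ, (B' n z - G' n z)) Filter.atTop := by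
    have h1 : L = ∫⁻ z : ℂ, Filter.liminf (fun n => B' n z - G' n z) Filter.atTop := by
      rw [hL]
      exact lintegral_congr fun z => ((h_sub_lim z).liminf_eq).symm
    rw [h1]
    exact lintegral_liminf_le fun n => (hB'meas n).sub (hG'meas n)
  -- convergence of ∫⁻ B' n to L
  have hb : Filter.Tendsto (fun n => ∫⁻ z : ℂ, B' n z) Filter.atTop (nhds L) := by
    have hInt : ∀ᶠ n in Filter.atTop, Integrable (fun z : ℂ => 2 ^ p * (‖f (u n • z)‖ ^ p
        * Real.exp (-α * p * ‖z‖ ^ 2 / 2) + ‖f z‖ ^ p * Real.exp (-α * p * ‖z‖ ^ 2 / 2))) :=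
      humem.mono fun n hn => ((hdil_int (u n) hn).add hint).const_mul _
    have hreal : Filter.Tendsto (fun n => ∫ z : ℂ, 2 ^ p * (‖f (u n • z)‖ ^ p
        * Real.exp (-α * p * ‖z‖ ^ 2 / 2) + ‖f z‖ ^ p * Real.exp (-α * p * ‖z‖ ^ 2 / 2)))
        Filter.atTop (nhds (∫ z : ℂ, 2 ^ p * (‖f z‖ ^ p * Real.exp (-α * p * ‖z‖ ^ 2 / 2)
          + ‖f z‖ ^ p * Real.exp (-α * p * ‖z‖ ^ 2 / 2)))) := by
      have h2 : Filter.Tendsto (fun n => 2 ^ p * ((∫ z : ℂ, ‖f (u n • z)‖ ^ p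
          * Real.exp (-α * p * ‖z‖ ^ 2 / 2)) + ∫ z : ℂ, ‖f z‖ ^ p
          * Real.exp (-α * p * ‖z‖ ^ 2 / 2))) Filter.atTop
          (nhds (2 ^ p * ((∫ z : ℂ, ‖f z‖ ^ p * Real.exp (-α * p * ‖z‖ ^ 2 / 2))
            + ∫ z : ℂ, ‖f z‖ ^ p * Real.exp (-α * p * ‖z‖ ^ 2 / 2)))) :=
        (hJlim.add tendsto_const_nhds).const_mul _
      have h3 : (∫ z : ℂ, 2 ^ p * (‖f z‖ ^ p * Real.exp (-α * p * ‖z‖ ^ 2 / 2)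
          + ‖f z‖ ^ p * Real.exp (-α * p * ‖z‖ ^ 2 / 2)))
          = 2 ^ p * ((∫ z : ℂ, ‖f z‖ ^ p * Real.exp (-α * p * ‖z‖ ^ 2 / 2))
            + ∫ z : ℂ, ‖f z‖ ^ p * Real.exp (-α * p * ‖z‖ ^ 2 / 2)) := by
        rw [integral_const_mul, integral_add hint hint]
      rw [h3]
      refine Filter.Tendsto.congr' ?_ h2
      refine humem.mono fun n hn => ?_
      beta_reduce
      rw [integral_const_mul, integral_add (hdil_int (u n) hn) hint]
    have h4 := ENNReal.tendsto_ofReal hreal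
    rw [← hL_eq] at h4
    refine Filter.Tendsto.congr' ?_ h4
    refine humem.mono fun n hn => ?_
    beta_reduce
    rw [ofReal_integral_eq_lintegral_ofReal (hBint n hn)
      (Filter.Eventually.of_forall fun z => by positivity)]
  have hb_ne : ∀ᶠ n in Filter.atTop, (∫⁻ z : ℂ, B' n z) ≠ ⊤ := by
    refine humem.mono fun n hn => ?_
    beta_reduce
    rw [← ofReal_integral_eq_lintegral_ofReal (hBint n hn)
      (Filter.Eventually.of_forall fun z => by positivity)]
    exact ENNReal.ofReal_ne_top
  -- limsup bound and convergence of ∫⁻ (B' - G')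
  have hlimsup : Filter.limsup (fun n => ∫⁻ z : ℂ, (B' n z - G' n z)) Filter.atTop ≤ L := by
    have h1 : ∀ n, (∫⁻ z : ℂ, (B' n z - G' n z)) ≤ ∫⁻ z : ℂ, B' n z :=
      fun n => lintegral_mono fun z => tsub_le_self
    calc Filter.limsup (fun n => ∫⁻ z : ℂ, (B' n z - G' n z)) Filter.atTop
        ≤ Filter.limsup (fun n => ∫⁻ z : ℂ, B' n z) Filter.atTop :=
          Filter.limsup_le_limsup (Filter.Eventually.of_forall h1)
      _ = L := hb.limsup_eq
  have h_sub_tendsto : Filter.Tendsto (fun n => ∫⁻ z : ℂ, (B' n z - G' n z)) Filter.atTop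
      (nhds L) := tendsto_of_le_liminf_of_limsup_le hliminf hlimsup
  -- eventually ∫⁻ G' n = ∫⁻ B' n - ∫⁻ (B' n - G' n)
  have hev : ∀ᶠ n in Filter.atTop,
      (∫⁻ z : ℂ, G' n z) = (∫⁻ z : ℂ, B' n z) - ∫⁻ z : ℂ, (B' n z - G' n z) := by
    refine hb_ne.mono fun n hn => ?_
    have hGle : (∫⁻ z : ℂ, G' n z) ≤ ∫⁻ z : ℂ, B' n z := lintegral_mono (hGB n)
    have hG_ne : (∫⁻ z : ℂ, G' n z) ≠ ⊤ := ne_top_of_le_ne_top hn hGle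
    rw [lintegral_sub' (hG'meas n).aemeasurable hG_ne
      (Filter.Eventually.of_forall (hGB n))]
    exact (ENNReal.sub_sub_cancel hn hGle).symm
  have hG_tendsto : Filter.Tendsto (fun n => ∫⁻ z : ℂ, G' n z) Filter.atTop (nhds 0) := by
    have := ENNReal.Tendsto.sub hb h_sub_tendsto (Or.inl hL_ne)
    rw [tsub_self] at this
    exact Filter.Tendsto.congr' (hev.mono fun n hn => hn.symm) this
  -- back to the real integral
  have hgoal : ∀ n, ((fun r : ℝ => ∫ z : ℂ, ‖f (r • z) - f z‖ ^ p
      * Real.exp (-α * p * ‖z‖ ^ 2 / 2)) ∘ u) n = (∫⁻ z : ℂ, G' n z).toReal := by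
    intro n
    simp only [Function.comp]
    exact integral_eq_lintegral_of_nonneg_ae
      (Filter.Eventually.of_forall fun z => mul_nonneg
        (Real.rpow_nonneg (norm_nonneg _) p) (hWnn z))
      (hGc n).aestronglyMeasurable
  have := (ENNReal.tendsto_toReal (a := 0) (by simp)).comp hG_tendsto
  rw [ENNReal.toReal_zero] at this
  exact Filter.Tendsto.congr (fun n => (hgoal n).symm) this
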